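/- Let b, b′ be pre-blowup operators on S. Then the composition bb′ is a pre-blowup operator on S. Consequently, S admits an idempotent pre-blowup operator (a blowup operator), namely the idempotent power b^ω of any pre-blowup operator under composition. -/
import Mathlib


open Pointwise

/-- A variety of finite groups: a class of finite groups closed under finite direct
products, subgroups and homomorphic images. -/
structure GroupVariety : Type 1 where
  mem : ∀ (G : Type) [Group G] [Finite G], Prop
  closed_prod : ∀ (G H : Type) [Group G] [Finite G] [Group H] [Finite H],
    mem G → mem H → mem (G × H)
  closed_sub : ∀ (G : Type) [Group G] [Finite G] (K : Subgroup G), mem G → mem K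
  closed_hom : ∀ (G H : Type) [Group G] [Finite G] [Group H] [Finite H] (f : G →* H),
    Function.Surjective f → mem G → mem H

/-- The 𝐇-kernel of a finite group: the smallest normal subgroup whose quotient
belongs to the class `P` of finite groups. -/
def HKer (P : ∀ (G : Type) [Group G] [Finite G], Prop) (G : Type) [Group G] [Finite G] :
    Subgroup G :=
  sInf {N : Subgroup G |
    ∃ h : N.Normal, @P (G ⧸ N) (@QuotientGroup.Quotient.group G _ N h) inferInstance}

/-- Green's preorder `x ≤_𝓛 y`, i.e. `x ∈ S¹y`. -/
def leL {S : Type} [Semigroup S] (x y : S) : Prop := x = y ∨ ∃ a, x = a * y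
/-- Green's preorder `x ≤_𝓡 y`, i.e. `x ∈ yS¹`. -/
def leR {S : Type} [Semigroup S] (x y : S) : Prop := x = y ∨ ∃ a, x = y * a
/-- Green's relation `𝓛`. -/
def eqL {S : Type} [Semigroup S] (x y : S) : Prop := leL x y ∧ leL y x
/-- Green's relation `𝓡`. -/
def eqR {S : Type} [Semigroup S] (x y : S) : Prop := leR x y ∧ leR y x
/-- Green's preorder `≤_𝓗`. -/
def leH {S : Type} [Semigroup S] (x y : S) : Prop := leL x y ∧ leR x y
/-- Green's relation `𝓗`. -/
def eqH {S : Type} [Semigroup S] (x y : S) : Prop := eqL x y ∧ eqR x y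
/-- The 𝓗-class of `x`. -/
def HClass {S : Type} [Semigroup S] (x : S) : Set S := {y | eqH y x}
/-- The 𝓛-class of `x`. -/
def LClass {S : Type} [Semigroup S] (x : S) : Set S := {y | eqL y x}

/-- The right stabilizer of a subset of `S`, as a submonoid of `S¹ = WithOne S`. -/
def stRsub {S : Type} [Semigroup S] (X : Set S) : Submonoid (WithOne S) where
  carrier := {u | ∀ x ∈ X, ∃ y ∈ X, (↑x * u : WithOne S) = ↑y}
  one_mem' := fun x hx => ⟨x, hx, mul_one _⟩
  mul_mem' := by
    intro u v hu hv x hx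
    obtain ⟨y, hy, hxy⟩ := hu x hx
    obtain ⟨z, hz, hyz⟩ := hv y hy
    exact ⟨z, hz, by rw [← mul_assoc, hxy, hyz]⟩

/-- Right multiplication by an element of `S¹ = WithOne S`, as a map `S → S`. -/
noncomputable def actW {S : Type} [Semigroup S] (q : S) (m : WithOne S) : S :=
  @dite _ (m = 1) (Classical.dec _) (fun _ => q) (fun h => q * WithOne.unone h)

/-- `s` is an 𝐇-element: the right Schützenberger group of its 𝓗-class lies in `V`;
equivalently, there is a group `G` in `V` and a surjection from the right stabilizer of
`H_s` onto `G` whose kernel is exactly the kernel of the action on `H_s`. -/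
def IsHElement (V : GroupVariety) {S : Type} [Semigroup S] (s : S) : Prop :=
  ∃ (G : Type) (iG : Group G) (fG : Finite G), @GroupVariety.mem V G iG fG ∧
    ∃ f : ↥(stRsub (HClass s)) →* G, Function.Surjective f ∧
      ∀ u v : ↥(stRsub (HClass s)),
        f u = f v ↔ ∀ x ∈ HClass s, ((↑x : WithOne S) * ↑u) = ↑x * ↑v

/-- A subset of `2^T` is H̄-saturated: a subsemigroup, downward closed, and closed
under taking unions of 𝐇-kernels of its subgroups. -/
def Saturated (V : GroupVariety) (T : Type) [Semigroup T] (A : Set (Set T)) : Prop :=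
  (∀ X ∈ A, ∀ Y ∈ A, X * Y ∈ A) ∧
  (∀ X ∈ A, ∀ Y : Set T, Y ⊆ X → Y ∈ A) ∧
  (∀ (G : Type) (iG : Group G) (fG : Finite G) (ι : @MulHom G (Set T) _ _),
      Function.Injective ι → (∀ g : G, ι g ∈ A) →
      (⋃ g ∈ (@HKer V.mem G iG fG : Subgroup G), ι g) ∈ A)

/-- The H̄-saturation of the set of singletons in `2^T`. -/
def SatSet (V : GroupVariety) (T : Type) [Semigroup T] [Finite T] : Set (Set T) :=
  ⋂₀ {A | Saturated V T A ∧ ∀ t : T, {t} ∈ A}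

/-- The H̄-saturation `S = Sat_H̄(Tη)` of the singletons, as a subsemigroup of `2^T`. -/
def SatSub (V : GroupVariety) (T : Type) [Semigroup T] [Finite T] : Subsemigroup (Set T) where
  carrier := SatSet V T
  mul_mem' := by
    intro a b ha hb
    rw [SatSet, Set.mem_sInter] at *
    exact fun A hA => hA.1.1 a (ha A hA) b (hb A hA)

/-- A pre-blowup operator on `S = Sat_H̄(Tη)`: (i) on each 𝓛-class it is given by right
multiplication by some `m_L ∈ S¹`; (ii) it fixes the 𝐇-elements and moves every other
element strictly 𝓗-downward; (iii) it enlarges each element (as a subset of `T`). -/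
def IsPreBlowup (V : GroupVariety) (T : Type) [Semigroup T] [Finite T]
    (b : ↥(SatSub V T) → ↥(SatSub V T)) : Prop :=
  (∀ s : ↥(SatSub V T), ∃ m : WithOne ↥(SatSub V T), ∀ s', eqL s' s → b s' = actW s' m) ∧
  (∀ s : ↥(SatSub V T), IsHElement V s → b s = s) ∧
  (∀ s : ↥(SatSub V T), ¬ IsHElement V s → leH (b s) s ∧ ¬ eqH (b s) s) ∧
  (∀ s : ↥(SatSub V T), (↑s : Set T) ⊆ (↑(b s) : Set T))

section AuxBlowup

variable {S : Type} [Semigroup S]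

theorem leL_trans' {x y z : S} (h1 : leL x y) (h2 : leL y z) : leL x z := by
  rcases h1 with rfl | ⟨a, rfl⟩ <;> rcases h2 with rfl | ⟨c, rfl⟩
  · exact Or.inl rfl
  · exact Or.inr ⟨c, rfl⟩
  · exact Or.inr ⟨a, rfl⟩
  · exact Or.inr ⟨a * c, (mul_assoc _ _ _).symm⟩

theorem leR_trans' {x y z : S} (h1 : leR x y) (h2 : leR y z) : leR x z := by
  rcases h1 with rfl | ⟨a, rfl⟩ <;> rcases h2 with rfl | ⟨c, rfl⟩
  · exact Or.inl rfl
  · exact Or.inr ⟨c, rfl⟩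
  · exact Or.inr ⟨a, rfl⟩
  · exact Or.inr ⟨c * a, mul_assoc _ _ _⟩

theorem leH_trans' {x y z : S} (h1 : leH x y) (h2 : leH y z) : leH x z :=
  ⟨leL_trans' h1.1 h2.1, leR_trans' h1.2 h2.2⟩

theorem actW_one' (q : S) : actW q (1 : WithOne S) = q := dif_pos rfl

theorem actW_coe' (q a : S) : actW q (a : WithOne S) = q * a := by
  rw [actW, dif_neg (WithOne.coe_ne_one (a := a))]
  simp

theorem actW_actW (q : S) (m m' : WithOne S) :
    actW (actW q m) m' = actW q (m * m') := by
  rcases eq_or_ne m 1 with rfl | hm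
  · rw [actW_one', one_mul]
  · obtain ⟨a, rfl⟩ := WithOne.ne_one_iff_exists.mp hm
    rcases eq_or_ne m' 1 with rfl | hm'
    · rw [actW_one', mul_one]
    · obtain ⟨c, rfl⟩ := WithOne.ne_one_iff_exists.mp hm'
      rw [actW_coe', actW_coe', ← WithOne.coe_mul, actW_coe', mul_assoc]

theorem leL_actW {q' q : S} (h : leL q' q) (m : WithOne S) :
    leL (actW q' m) (actW q m) := by
  rcases eq_or_ne m 1 with rfl | hm
  · rw [actW_one', actW_one']; exact h
  · obtain ⟨a, rfl⟩ := WithOne.ne_one_iff_exists.mp hm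
    rw [actW_coe', actW_coe']
    rcases h with rfl | ⟨c, rfl⟩
    · exact Or.inl rfl
    · exact Or.inr ⟨c, mul_assoc _ _ _⟩

end AuxBlowup

/-- Pre-blowup operators are closed under composition, and hence `S` admits an
idempotent pre-blowup operator (a blowup operator), namely an idempotent power of any
pre-blowup operator. -/
theorem blowup_exists (V : GroupVariety) (T : Type) [Semigroup T] [Finite T] :
    (∀ b b' : ↥(SatSub V T) → ↥(SatSub V T), IsPreBlowup V T b → IsPreBlowup V T b' →
      IsPreBlowup V T (fun s => b' (b s))) ∧
    (∀ b : ↥(SatSub V T) → ↥(SatSub V T), IsPreBlowup V T b →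
      ∃ n : ℕ, 0 < n ∧ IsPreBlowup V T b^[n] ∧ ∀ s, b^[n] (b^[n] s) = b^[n] s) := by
  have comp : ∀ b b' : ↥(SatSub V T) → ↥(SatSub V T), IsPreBlowup V T b → IsPreBlowup V T b' →
      IsPreBlowup V T (fun s => b' (b s)) := by
    intro b b' hb hb'
    obtain ⟨hb1, hb2, hb3, hb4⟩ := hb
    obtain ⟨hb'1, hb'2, hb'3, hb'4⟩ := hb'
    refine ⟨?_, ?_, ?_, ?_⟩
    · intro s
      obtain ⟨m₁, hm₁⟩ := hb1 s
      obtain ⟨m₂, hm₂⟩ := hb'1 (b s)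
      refine ⟨m₁ * m₂, fun s' hs' => ?_⟩
      have hbs' : eqL (b s') (b s) := by
        rw [hm₁ s' hs', hm₁ s ⟨Or.inl rfl, Or.inl rfl⟩]
        exact ⟨leL_actW hs'.1 _, leL_actW hs'.2 _⟩
      simp only []
      rw [hm₂ _ hbs', hm₁ s' hs', actW_actW]
    · intro s hs
      simp only []
      rw [hb2 s hs]
      exact hb'2 s hs
    · intro s hs
      obtain ⟨hle, hne⟩ := hb3 s hs
      simp only []
      by_cases h : IsHElement V (b s)
      · rw [hb'2 _ h]; exact ⟨hle, hne⟩
      · obtain ⟨hle', hne'⟩ := hb'3 _ h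
        refine ⟨leH_trans' hle' hle, fun he => hne ?_⟩
        have h1 : leH (s : ↥(SatSub V T)) (b' (b s)) := ⟨he.1.2, he.2.2⟩
        have h2 : leH (s : ↥(SatSub V T)) (b s) := leH_trans' h1 hle'
        exact ⟨⟨hle.1, h2.1⟩, ⟨hle.2, h2.2⟩⟩
    · intro s
      exact Set.Subset.trans (hb4 s) (hb'4 (b s))
  refine ⟨comp, ?_⟩
  intro b hb
  have hiter : ∀ n : ℕ, IsPreBlowup V T b^[n + 1] := by
    intro n
    induction n with
    | zero => rw [Function.iterate_one]; exact hb
    | succ k ih =>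
      rw [Function.iterate_succ']
      exact comp b^[k + 1] b ih hb
  have key : ∀ i j : ℕ, i < j → b^[i] = b^[j] →
      ∃ n : ℕ, 0 < n ∧ ∀ s, b^[n] (b^[n] s) = b^[n] s := by
    intro i j hij heq
    set p := j - i with hp
    have hp0 : 0 < p := Nat.sub_pos_of_lt hij
    have hstep : ∀ k, i ≤ k → b^[k + p] = b^[k] := by
      intro k hk
      have h1 : k + p = (k - i) + j := by omega
      have h2 : k = (k - i) + i := by omega
      rw [h1, Function.iterate_add, ← heq, ← Function.iterate_add, ← h2]
    have hmul : ∀ m k, i ≤ k → b^[k + m * p] = b^[k] := by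
      intro m
      induction m with
      | zero => intro k _; simp
      | succ q ih =>
        intro k hk
        have h1 : k + (q + 1) * p = (k + p) + q * p := by ring
        rw [h1, ih (k + p) (by omega), hstep k hk]
    have hki : i ≤ p * (i + 1) := by
      have : i + 1 ≤ p * (i + 1) := Nat.le_mul_of_pos_left _ hp0
      omega
    refine ⟨p * (i + 1), by positivity, fun s => ?_⟩
    have h2 : b^[p * (i + 1) + p * (i + 1)] = b^[p * (i + 1)] := by
      have h3 := hmul (i + 1) (p * (i + 1)) hki
      have h4 : p * (i + 1) + (i + 1) * p = p * (i + 1) + p * (i + 1) := by ring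
      rw [h4] at h3
      exact h3
    rw [← Function.iterate_add_apply, h2]
  obtain ⟨i, j, hne, heq⟩ :=
    Finite.exists_ne_map_eq_of_infinite (fun n : ℕ => b^[n])
  have hn : ∃ n : ℕ, 0 < n ∧ ∀ s, b^[n] (b^[n] s) = b^[n] s := by
    rcases hne.lt_or_gt with h | h
    · exact key i j h heq
    · exact key j i h heq.symm
  obtain ⟨n, hn0, hidem⟩ := hn
  obtain ⟨m, rfl⟩ := Nat.exists_eq_succ_of_ne_zero hn0.ne'
  exact ⟨m + 1, hn0, hiter m, hidem⟩
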